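/- Let n ≥ 1 and let K be a proper simplicial complex on [n] without ghost vertices. Then K is a threshold complex if and only if K admits a K-submodular function. (This is the combinatorial form of the paper's Theorem 1.1: by the K-submodularity criterion, existence of a K-submodular function is equivalent to polytopality of the canonical fan Fan(K) of the Bier sphere Bier(K).) -/
import Mathlib


open Finset

/-- A simplicial complex on `[n]`: a family of subsets containing `∅` and
closed under taking subsets. -/
def IsComplex (n : ℕ) (K : Set (Finset (Fin n))) : Prop :=
  ∅ ∈ K ∧ ∀ A B : Finset (Fin n), A ⊆ B → B ∈ K → A ∈ K

/-- No ghost vertices: every singleton is a face. -/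
def NoGhost (n : ℕ) (K : Set (Finset (Fin n))) : Prop :=
  ∀ i : Fin n, ({i} : Finset (Fin n)) ∈ K

/-- `K` is a threshold complex: there are strictly positive weights `w` and a
quota `q` with `A ∈ K ↔ w(A) < q`. -/
def IsThreshold (n : ℕ) (K : Set (Finset (Fin n))) : Prop :=
  ∃ (w : Fin n → ℝ) (q : ℝ), (∀ i, 0 < w i) ∧
    ∀ A : Finset (Fin n), A ∈ K ↔ ∑ i ∈ A, w i < q

/-- A K-submodular function: a pair of vectors `x y : [n] → ℝ` satisfying, for
every ridge datum `[n] = X1 ⊔ {c1,c2} ⊔ X2` (so `X2 = (X1 ∪ {c1,c2})ᶜ`) with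
`X1 ∈ K` and `X2 ∈ K°` (i.e. `X2ᶜ = X1 ∪ {c1,c2} ∉ K`):
the Λ-, V- and X-configuration inequalities. -/
def IsKSubmodular (n : ℕ) (K : Set (Finset (Fin n))) (x y : Fin n → ℝ) : Prop :=
  ∀ (X1 : Finset (Fin n)) (c1 c2 : Fin n),
    c1 ≠ c2 → c1 ∉ X1 → c2 ∉ X1 → X1 ∈ K → insert c1 (insert c2 X1) ∉ K →
    ((insert c1 X1 ∈ K → insert c2 X1 ∈ K →
        ∑ i ∈ X1, x i + x c1 + x c2 > ∑ j ∈ (insert c1 (insert c2 X1))ᶜ, y j) ∧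
     (insert c1 X1 ∉ K → insert c2 X1 ∉ K →
        ∑ j ∈ (insert c1 (insert c2 X1))ᶜ, y j + y c1 + y c2 > ∑ i ∈ X1, x i) ∧
     (insert c2 X1 ∈ K → insert c1 X1 ∉ K → x c2 + y c2 > 0))

/-- A non-strict K-submodular function: the Λ- and V-inequalities are non-strict,
and for X-configurations with distinguished element `c2` one requires
`x c2 > 0` and `y c2 > 0`. -/
def IsNonStrictKSubmodular (n : ℕ) (K : Set (Finset (Fin n))) (x y : Fin n → ℝ) : Prop :=
  ∀ (X1 : Finset (Fin n)) (c1 c2 : Fin n),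
    c1 ≠ c2 → c1 ∉ X1 → c2 ∉ X1 → X1 ∈ K → insert c1 (insert c2 X1) ∉ K →
    ((insert c1 X1 ∈ K → insert c2 X1 ∈ K →
        ∑ i ∈ X1, x i + x c1 + x c2 ≥ ∑ j ∈ (insert c1 (insert c2 X1))ᶜ, y j) ∧
     (insert c1 X1 ∉ K → insert c2 X1 ∉ K →
        ∑ j ∈ (insert c1 (insert c2 X1))ᶜ, y j + y c1 + y c2 ≥ ∑ i ∈ X1, x i) ∧
     (insert c2 X1 ∈ K → insert c1 X1 ∉ K → 0 < x c2 ∧ 0 < y c2))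

/-- `K` (the set of losing coalitions) is roughly weighted with strictly positive
weights `w` and quota `q > 0`. -/
def RoughlyWeighted (n : ℕ) (K : Set (Finset (Fin n))) (w : Fin n → ℝ) (q : ℝ) : Prop :=
  (∀ i, 0 < w i) ∧ 0 < q ∧ ∀ X : Finset (Fin n),
    (q < ∑ i ∈ X, w i → X ∉ K) ∧ (∑ i ∈ X, w i < q → X ∈ K)

namespace BierDev

variable {n : ℕ}

def ComplexOn (E : Finset (Fin n)) (K : Set (Finset (Fin n))) : Prop :=
  ∅ ∈ K ∧ (∀ A ∈ K, A ⊆ E) ∧ ∀ A B : Finset (Fin n), A ⊆ B → B ∈ K → A ∈ K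

def SubmodOn (E : Finset (Fin n)) (K : Set (Finset (Fin n))) (x y : Fin n → ℝ) : Prop :=
  ∀ (X1 : Finset (Fin n)) (c1 c2 : Fin n),
    c1 ∈ E → c2 ∈ E → c1 ≠ c2 → c1 ∉ X1 → c2 ∉ X1 → X1 ∈ K →
    insert c1 (insert c2 X1) ∉ K →
    ((insert c1 X1 ∈ K → insert c2 X1 ∈ K →
        ∑ i ∈ X1, x i + x c1 + x c2 > ∑ j ∈ E \ insert c1 (insert c2 X1), y j) ∧
     (insert c1 X1 ∉ K → insert c2 X1 ∉ K →
        ∑ j ∈ E \ insert c1 (insert c2 X1), y j + y c1 + y c2 > ∑ i ∈ X1, x i) ∧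
     (insert c2 X1 ∈ K → insert c1 X1 ∉ K → x c2 + y c2 > 0))

def ThresholdOn (E : Finset (Fin n)) (K : Set (Finset (Fin n))) : Prop :=
  ∃ (w : Fin n → ℝ) (q : ℝ), (∀ i ∈ E, 0 < w i) ∧
    ∀ A ⊆ E, (A ∈ K ↔ ∑ i ∈ A, w i < q)

def IsFacet (E : Finset (Fin n)) (K : Set (Finset (Fin n)))
    (A : Finset (Fin n)) (c : Fin n) : Prop :=
  A ∈ K ∧ c ∈ E ∧ c ∉ A ∧ insert c A ∉ K

lemma nonface_super {E : Finset (Fin n)} {K : Set (Finset (Fin n))}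
    (hK : ComplexOn E K) {A B : Finset (Fin n)} (h : A ∉ K) (hAB : A ⊆ B) : B ∉ K :=
  fun hB => h (hK.2.2 A B hAB hB)

/-- grow a face inside `S` until blocked -/
lemma exists_facet_above {E S : Finset (Fin n)} {K : Set (Finset (Fin n))}
    (hK : ComplexOn E K) (hSE : S ⊆ E) (hS : S ∉ K) :
    ∀ (k : ℕ) (A : Finset (Fin n)), (S \ A).card ≤ k → A ∈ K → A ⊆ S →
    ∃ A' c, A ⊆ A' ∧ A' ⊆ S ∧ c ∈ S ∧ IsFacet E K A' c := by
  intro k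
  induction k with
  | zero =>
    intro A hcard hA hAS
    exfalso
    have : S \ A = ∅ := Finset.card_eq_zero.1 (Nat.le_zero.1 hcard)
    have hSA : S ⊆ A := by
      intro s hs
      by_contra hsA
      exact (Finset.notMem_empty s) (this ▸ Finset.mem_sdiff.2 ⟨hs, hsA⟩)
    exact hS (by rwa [Finset.Subset.antisymm hAS hSA] at hA)
  | succ k ih =>
    intro A hcard hA hAS
    by_cases hblock : ∃ c ∈ S \ A, insert c A ∉ K
    · obtain ⟨c, hc, hcK⟩ := hblock
      rw [Finset.mem_sdiff] at hc
      exact ⟨A, c, Finset.Subset.refl A, hAS, hc.1, hA, hSE hc.1, hc.2, hcK⟩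
    · push_neg at hblock
      have hne : (S \ A).Nonempty := by
        rw [Finset.nonempty_iff_ne_empty]
        intro hemp
        have hSA : S ⊆ A := by
          intro s hs
          by_contra hsA
          exact (Finset.notMem_empty s) (hemp ▸ Finset.mem_sdiff.2 ⟨hs, hsA⟩)
        exact hS (by rwa [Finset.Subset.antisymm hAS hSA] at hA)
      obtain ⟨c, hc⟩ := hne
      have hc' := Finset.mem_sdiff.1 hc
      have hcK : insert c A ∈ K := hblock c hc
      have hcard' : (S \ insert c A).card ≤ k := by
        have : S \ insert c A = (S \ A).erase c := by
          rw [Finset.sdiff_insert]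
        rw [this, Finset.card_erase_of_mem hc]
        omega
      obtain ⟨A', c', h1, h2, h3, h4⟩ := ih (insert c A) hcard' hcK
        (Finset.insert_subset hc'.1 hAS)
      exact ⟨A', c', (Finset.subset_insert c A).trans h1, h2, h3, h4⟩


/-- the support-function value of the facet `(A,c)` (with `B = E \ insert c A`)
at the vector `v`. -/
def Fval (x y : Fin n → ℝ) (E A : Finset (Fin n)) (c : Fin n) (v : Fin n → ℝ) : ℝ :=
  ∑ i ∈ A, x i * (v i - v c) + ∑ j ∈ E \ insert c A, y j * (v c - v j)

lemma sum_shiftA (s : Finset (Fin n)) (f v : Fin n → ℝ) (t t' : ℝ) :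
    ∑ i ∈ s, f i * (v i - t) = ∑ i ∈ s, f i * (v i - t') + (∑ i ∈ s, f i) * (t' - t) := by
  rw [Finset.sum_mul, ← Finset.sum_add_distrib]
  exact Finset.sum_congr rfl (fun i _ => by ring)

lemma sum_shiftB (s : Finset (Fin n)) (f v : Fin n → ℝ) (t t' : ℝ) :
    ∑ i ∈ s, f i * (t - v i) = ∑ i ∈ s, f i * (t' - v i) + (∑ i ∈ s, f i) * (t - t') := by
  rw [Finset.sum_mul, ← Finset.sum_add_distrib]
  exact Finset.sum_congr rfl (fun i _ => by ring)

lemma Fval_congr (x y : Fin n → ℝ) (E A : Finset (Fin n)) (c : Fin n)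
    (hA : A ⊆ E) (hc : c ∈ E) {v w : Fin n → ℝ} (h : ∀ j ∈ E, v j = w j) :
    Fval x y E A c v = Fval x y E A c w := by
  unfold Fval
  congr 1
  · exact Finset.sum_congr rfl (fun i hi => by rw [h i (hA hi), h c hc])
  · exact Finset.sum_congr rfl (fun j hj => by
      rw [h j (Finset.mem_sdiff.1 hj).1, h c hc])

lemma Fval_sum (x y : Fin n → ℝ) (E A : Finset (Fin n)) (c : Fin n)
    (s : Finset (Fin n)) (f : Fin n → Fin n → ℝ) :
    Fval x y E A c (fun j => ∑ b ∈ s, f b j) = ∑ b ∈ s, Fval x y E A c (f b) := by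
  unfold Fval
  rw [Finset.sum_add_distrib]
  congr 1
  · rw [Finset.sum_comm]
    exact Finset.sum_congr rfl (fun i _ => by
      rw [← Finset.sum_sub_distrib, Finset.mul_sum])
  · rw [Finset.sum_comm]
    exact Finset.sum_congr rfl (fun j _ => by
      rw [← Finset.sum_sub_distrib, Finset.mul_sum])


lemma improve {E : Finset (Fin n)} {K : Set (Finset (Fin n))} {x y : Fin n → ℝ}
    (hK : ComplexOn E K) (hsub : SubmodOn E K x y)
    {A : Finset (Fin n)} {c : Fin n} (hf : IsFacet E K A c) (v : Fin n → ℝ)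
    (h : (∃ a ∈ A, v a < v c) ∨ (∃ j ∈ E \ insert c A, v c < v j)) :
    ∃ A' c', IsFacet E K A' c' ∧ Fval x y E A c v < Fval x y E A' c' v := by
  obtain ⟨hAK, hcE, hcA, hblock⟩ := hf
  have hAE : A ⊆ E := hK.2.1 A hAK
  rcases h with ⟨a, haA, hva⟩ | ⟨b, hbB, hvb⟩
  · -- decrease at a vertex of A
    have haE : a ∈ E := hAE haA
    have hac : a ≠ c := fun h => hcA (h ▸ haA)
    have haX1 : a ∉ A.erase a := Finset.notMem_erase a A
    have hcX1 : c ∉ A.erase a := fun h => hcA (Finset.erase_subset a A h)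
    have hX1K : A.erase a ∈ K := hK.2.2 _ _ (Finset.erase_subset a A) hAK
    have hins : insert a (A.erase a) = A := Finset.insert_erase haA
    have hF : insert a (insert c (A.erase a)) = insert c A := by
      rw [Finset.insert_comm, hins]
    have hF' : insert c (insert a (A.erase a)) = insert c A := by rw [hins]
    have hold : Fval x y E A c v =
        x a * (v a - v c) + (∑ i ∈ A.erase a, x i * (v i - v c)) +
          ∑ j ∈ E \ insert c A, y j * (v c - v j) := by
      rw [Fval, ← Finset.sum_erase_add A _ haA]; ring
    by_cases hcase : insert c (A.erase a) ∈ K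
    · -- Λ-move
      have key := (hsub (A.erase a) a c haE hcE hac haX1 hcX1 hX1K
        (by rwa [hF])).1 (by rwa [hins]) hcase
      rw [hF] at key
      refine ⟨insert c (A.erase a), a,
        ⟨hcase, haE, by simp [Finset.mem_insert, hac, haX1], by rwa [hF]⟩, ?_⟩
      have hnew : Fval x y E (insert c (A.erase a)) a v =
          x c * (v c - v a) +
            ((∑ i ∈ A.erase a, x i * (v i - v c)) + (∑ i ∈ A.erase a, x i) * (v c - v a)) +
            ((∑ j ∈ E \ insert c A, y j * (v c - v j)) +
              (∑ j ∈ E \ insert c A, y j) * (v a - v c)) := by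
        rw [Fval, hF, Finset.sum_insert hcX1,
          sum_shiftA (A.erase a) x v (v a) (v c), sum_shiftB (E \ insert c A) y v (v a) (v c)]
      rw [hold, hnew]
      nlinarith [mul_pos (sub_pos.2 hva) (sub_pos.2 key)]
    · -- X-move (a leaves to the B-side)
      have key := (hsub (A.erase a) c a hcE haE (Ne.symm hac) hcX1 haX1 hX1K
        (by rwa [hF'])).2.2 (by rwa [hins]) hcase
      refine ⟨A.erase a, c, ⟨hX1K, hcE, hcX1, hcase⟩, ?_⟩
      have hBid : E \ insert c (A.erase a) = insert a (E \ insert c A) := by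
        ext j
        by_cases hj : j = a <;>
          simp [hj, Finset.mem_sdiff, Finset.mem_insert, Finset.mem_erase,
            hac, haE, haA] <;> tauto
      have haB : a ∉ E \ insert c A := by
        simp [Finset.mem_sdiff, Finset.mem_insert, haA]
      have hnew : Fval x y E (A.erase a) c v =
          (∑ i ∈ A.erase a, x i * (v i - v c)) +
            (y a * (v c - v a) + ∑ j ∈ E \ insert c A, y j * (v c - v j)) := by
        rw [Fval, hBid, Finset.sum_insert haB]
      rw [hold, hnew]
      nlinarith [mul_pos (sub_pos.2 hva) key]
  · -- increase at a vertex of B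
    have hbmem := Finset.mem_sdiff.1 hbB
    have hbE : b ∈ E := hbmem.1
    have hbc : b ≠ c := fun h => hbmem.2 (by rw [h]; exact Finset.mem_insert_self c A)
    have hbA : b ∉ A := fun h => hbmem.2 (Finset.mem_insert_of_mem h)
    have hFsup : insert c A ⊆ insert b (insert c A) := Finset.subset_insert _ _
    have hidB : E \ insert b (insert c A) = (E \ insert c A).erase b :=
      Finset.sdiff_insert E (insert c A) b
    have hidB' : E \ insert c (insert b A) = (E \ insert c A).erase b := by
      rw [Finset.insert_comm]; exact hidB
    have hold : Fval x y E A c v =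
        (∑ i ∈ A, x i * (v i - v c)) +
          ((∑ j ∈ (E \ insert c A).erase b, y j * (v c - v j)) + y b * (v c - v b)) := by
      rw [Fval, ← Finset.sum_erase_add (E \ insert c A) _ hbB]
    by_cases hcase : insert b A ∈ K
    · -- X-move (b joins A)
      have key := (hsub A c b hcE hbE (Ne.symm hbc) hcA hbA hAK
        (by rw [Finset.insert_comm]; exact nonface_super hK hblock hFsup)).2.2
        hcase hblock
      have hcbA : c ∉ insert b A := by
        simp [Finset.mem_insert, Ne.symm hbc, hcA]
      refine ⟨insert b A, c, ⟨hcase, hcE, hcbA,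
        nonface_super hK hblock (Finset.insert_subset_insert c (Finset.subset_insert b A))⟩, ?_⟩
      have hnew : Fval x y E (insert b A) c v =
          (x b * (v b - v c) + ∑ i ∈ A, x i * (v i - v c)) +
            ∑ j ∈ (E \ insert c A).erase b, y j * (v c - v j) := by
        rw [Fval, Finset.sum_insert hbA, hidB']
      rw [hold, hnew]
      nlinarith [mul_pos (sub_pos.2 hvb) key]
    · -- V-move
      have key := (hsub A b c hbE hcE hbc hbA hcA hAK
        (nonface_super hK hblock hFsup)).2.1 hcase hblock
      rw [hidB] at key
      refine ⟨A, b, ⟨hAK, hbE, hbA, hcase⟩, ?_⟩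
      have hcB : c ∉ (E \ insert c A).erase b := by
        simp [Finset.mem_sdiff, Finset.mem_insert]
      have hidC : E \ insert b A = insert c ((E \ insert c A).erase b) := by
        ext j
        by_cases hj : j = c <;>
          simp [hj, Finset.mem_sdiff, Finset.mem_insert, Finset.mem_erase,
            hbc, hcE, hcA] <;> tauto
      have hnew : Fval x y E A b v =
          ((∑ i ∈ A, x i * (v i - v c)) + (∑ i ∈ A, x i) * (v c - v b)) +
            (y c * (v b - v c) +
              ((∑ j ∈ (E \ insert c A).erase b, y j * (v c - v j)) +
                (∑ j ∈ (E \ insert c A).erase b, y j) * (v b - v c))) := by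
        rw [Fval, hidC, Finset.sum_insert hcB,
          sum_shiftA A x v (v b) (v c),
          sum_shiftB ((E \ insert c A).erase b) y v (v b) (v c)]
      rw [hold, hnew]
      nlinarith [mul_pos (sub_pos.2 hvb) (sub_pos.2 key)]


def negind (b : Fin n) : Fin n → ℝ := fun j => if j = b then -1 else 0

lemma subset_from_sdiff_empty {E S : Finset (Fin n)} (h : E \ S = ∅) : E ⊆ S := by
  intro j hj
  by_contra hjn
  exact (Finset.notMem_empty j) (h ▸ Finset.mem_sdiff.2 ⟨hj, hjn⟩)

/-- If the facet `(A,c)` "sees" `b` on the wrong side, there is a strictly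
better facet for the direction `negind b`. -/
lemma improve_negind {E : Finset (Fin n)} {K : Set (Finset (Fin n))} {x y : Fin n → ℝ}
    (hK : ComplexOn E K) (hsub : SubmodOn E K x y)
    {b : Fin n} (hbE : b ∈ E) (hbco : E.erase b ∉ K)
    {A : Finset (Fin n)} {c : Fin n} (hf : IsFacet E K A c) (hbin : b ∈ insert c A) :
    ∃ A' c', IsFacet E K A' c' ∧
      Fval x y E A c (negind b) < Fval x y E A' c' (negind b) := by
  rcases Finset.mem_insert.1 hbin with hb1 | hb2
  · -- b = c
    have hBne : (E \ insert c A).Nonempty := by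
      rw [Finset.nonempty_iff_ne_empty]
      intro hemp
      have hsub1 : E ⊆ insert c A := subset_from_sdiff_empty hemp
      have hAeq : A = E.erase c := by
        apply Finset.Subset.antisymm
        · intro j hj
          exact Finset.mem_erase.2 ⟨fun h => hf.2.2.1 (h ▸ hj), hK.2.1 A hf.1 hj⟩
        · intro j hj
          rcases Finset.mem_insert.1 (hsub1 (Finset.erase_subset c E hj)) with h | h
          · exact absurd h (Finset.mem_erase.1 hj).1
          · exact h
      apply hbco
      rw [← hb1] at hAeq
      exact hAeq ▸ hf.1
    obtain ⟨b', hb'⟩ := hBne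
    have hb'b : b' ≠ b := by
      intro h
      have := (Finset.mem_sdiff.1 hb').2
      rw [h, hb1] at this
      exact this (Finset.mem_insert_self c A)
    have hb'c : b' ≠ c := fun h => hb'b (h.trans hb1.symm)
    refine improve hK hsub hf (negind b) (Or.inr ⟨b', hb', ?_⟩)
    simp [negind, hb1, hb'b, hb'c]
  · -- b ∈ A
    have hcb : c ≠ b := fun h => hf.2.2.1 (h ▸ hb2)
    refine improve hK hsub hf (negind b) (Or.inl ⟨b, hb2, ?_⟩)
    simp [negind, hcb]

lemma KS1 {E : Finset (Fin n)} {K : Set (Finset (Fin n))} {x y : Fin n → ℝ}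
    (hK : ComplexOn E K) (hEK : E ∉ K) (hsub : SubmodOn E K x y)
    {b : Fin n} (hbE : b ∈ E) (hbco : E.erase b ∉ K) :
    ∀ A c, IsFacet E K A c →
      Fval x y E A c (negind b) ≤ y b ∧
      (b ∈ insert c A → Fval x y E A c (negind b) < y b) := by
  classical
  set Fs : Finset (Finset (Fin n) × Fin n) :=
    (E.powerset ×ˢ E).filter
      (fun p => p.1 ∈ K ∧ p.2 ∉ p.1 ∧ insert p.2 p.1 ∉ K) with hFs
  have hmemFs : ∀ A c, IsFacet E K A c → (A, c) ∈ Fs := by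
    rintro A c ⟨h1, h2, h3, h4⟩
    rw [hFs, Finset.mem_filter, Finset.mem_product, Finset.mem_powerset]
    exact ⟨⟨hK.2.1 A h1, h2⟩, h1, h3, h4⟩
  have hFsfac : ∀ p ∈ Fs, IsFacet E K p.1 p.2 := by
    intro p hp
    rw [hFs, Finset.mem_filter, Finset.mem_product, Finset.mem_powerset] at hp
    exact ⟨hp.2.1, hp.1.2, hp.2.2.1, hp.2.2.2⟩
  have hne : Fs.Nonempty := by
    obtain ⟨A', c', _, _, hc'S, hfac⟩ :=
      exists_facet_above hK (Finset.Subset.refl E) hEK (E \ ∅).card ∅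
        (le_refl _) hK.1 (Finset.empty_subset E)
    exact ⟨(A', c'), hmemFs A' c' hfac⟩
  obtain ⟨p, hp, hmax⟩ := Fs.exists_max_image (fun p => Fval x y E p.1 p.2 (negind b)) hne
  have hpfac := hFsfac p hp
  -- b is on the B-side of the maximizing facet
  have hbB : b ∈ E \ insert p.2 p.1 := by
    by_contra hbin
    have hbin' : b ∈ insert p.2 p.1 := by
      by_contra h
      exact hbin (Finset.mem_sdiff.2 ⟨hbE, h⟩)
    obtain ⟨A', c', hfac', hlt⟩ := improve_negind hK hsub hbE hbco hpfac hbin'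
    exact absurd (hmax (A', c') (hmemFs A' c' hfac')) (not_le.2 hlt)
  -- the maximal value is `y b`
  have hMval : Fval x y E p.1 p.2 (negind b) = y b := by
    have hbne : b ≠ p.2 := fun h =>
      (Finset.mem_sdiff.1 hbB).2 (h ▸ Finset.mem_insert_self p.2 p.1)
    have h1 : ∀ i ∈ p.1, x i * (negind b i - negind b p.2) = 0 := by
      intro i hi
      have hib : i ≠ b := fun h =>
        (Finset.mem_sdiff.1 hbB).2 (Finset.mem_insert_of_mem (h ▸ hi))
      simp [negind, hib, hbne.symm]
    have h2 : ∀ j ∈ E \ insert p.2 p.1,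
        y j * (negind b p.2 - negind b j) = if j = b then y j else 0 := by
      intro j hj
      by_cases hjb : j = b <;> simp [negind, hjb, hbne.symm]
    rw [Fval, Finset.sum_eq_zero h1, Finset.sum_congr rfl h2,
      Finset.sum_ite_eq' (E \ insert p.2 p.1) b (fun j => y j), if_pos hbB]
    ring
  intro A c hfac
  constructor
  · have := hmax (A, c) (hmemFs A c hfac)
    simpa [hMval] using this
  · intro hbin
    obtain ⟨A', c', hfac', hlt⟩ := improve_negind hK hsub hbE hbco hfac hbin
    have := hmax (A', c') (hmemFs A' c' hfac')
    simp only [hMval] at this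
    linarith


lemma mainP {E : Finset (Fin n)} {K : Set (Finset (Fin n))} {x y : Fin n → ℝ}
    (hK : ComplexOn E K) (hco : ∀ b ∈ E, E.erase b ∉ K)
    (hEK : E ∉ K) (hsub : SubmodOn E K x y)
    {A₀ : Finset (Fin n)} (hA₀E : A₀ ⊆ E) (hA₀ : A₀ ∈ K) :
    ∑ i ∈ A₀, x i < ∑ j ∈ E \ A₀, y j := by
  classical
  obtain ⟨A₁, c₀, hsubA, hA₁S, hc₀S, hfac⟩ :=
    exists_facet_above hK (Finset.Subset.refl E) hEK (E \ A₀).card A₀ (le_refl _) hA₀ hA₀E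
  have hc₀A₀ : c₀ ∉ A₀ := fun h => hfac.2.2.1 (hsubA h)
  have hA₁E : A₁ ⊆ E := hK.2.1 _ hfac.1
  set V : Fin n → ℝ := fun j => if j ∈ A₀ then 0 else -1 with hV
  have h1 : Fval x y E A₁ c₀ V = ∑ i ∈ A₀, x i := by
    rw [Fval]
    have hx : ∀ i ∈ A₁, x i * (V i - V c₀) = if i ∈ A₀ then x i else 0 := by
      intro i hi
      by_cases h : i ∈ A₀ <;> simp [hV, h, hc₀A₀]
    have hy : ∀ j ∈ E \ insert c₀ A₁, y j * (V c₀ - V j) = 0 := by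
      intro j hj
      have hjA₀ : j ∉ A₀ := fun h =>
        (Finset.mem_sdiff.1 hj).2 (Finset.mem_insert_of_mem (hsubA h))
      simp [hV, hjA₀, hc₀A₀]
    rw [Finset.sum_congr rfl hx, Finset.sum_eq_zero hy, Finset.sum_ite_mem,
      Finset.inter_eq_right.2 hsubA]
    ring
  have h2 : Fval x y E A₁ c₀ V = ∑ b ∈ E \ A₀, Fval x y E A₁ c₀ (negind b) := by
    rw [← Fval_sum x y E A₁ c₀ (E \ A₀) (fun b => negind b)]
    apply Fval_congr x y E A₁ c₀ hA₁E hfac.2.1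
    intro j hj
    by_cases h : j ∈ A₀
    · have hjn : j ∉ E \ A₀ := fun hc => (Finset.mem_sdiff.1 hc).2 h
      simp [hV, h, negind, Finset.sum_ite_eq, hjn]
    · have hjy : j ∈ E \ A₀ := Finset.mem_sdiff.2 ⟨hj, h⟩
      simp [hV, h, negind, Finset.sum_ite_eq, hjy]
  have hc₀EA : c₀ ∈ E \ A₀ := Finset.mem_sdiff.2 ⟨hfac.2.1, hc₀A₀⟩
  have hlt : ∑ b ∈ E \ A₀, Fval x y E A₁ c₀ (negind b) < ∑ b ∈ E \ A₀, y b := by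
    apply Finset.sum_lt_sum
    · intro b hb
      exact (KS1 hK hEK hsub (Finset.mem_sdiff.1 hb).1
        (hco b (Finset.mem_sdiff.1 hb).1) A₁ c₀ hfac).1
    · exact ⟨c₀, hc₀EA, (KS1 hK hEK hsub hfac.2.1 (hco c₀ hfac.2.1) A₁ c₀ hfac).2
        (Finset.mem_insert_self c₀ A₁)⟩
  calc ∑ i ∈ A₀, x i = Fval x y E A₁ c₀ V := h1.symm
    _ = ∑ b ∈ E \ A₀, Fval x y E A₁ c₀ (negind b) := h2
    _ < ∑ b ∈ E \ A₀, y b := hlt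


def DualOn (E : Finset (Fin n)) (K : Set (Finset (Fin n))) : Set (Finset (Fin n)) :=
  {S | S ⊆ E ∧ E \ S ∉ K}

lemma dual_complex {E : Finset (Fin n)} {K : Set (Finset (Fin n))}
    (hK : ComplexOn E K) (hEK : E ∉ K) : ComplexOn E (DualOn E K) := by
  refine ⟨⟨Finset.empty_subset E, by simpa using hEK⟩,
    fun A hA => hA.1, fun A B hAB hB => ⟨hAB.trans hB.1, fun hEA => hB.2 ?_⟩⟩
  exact hK.2.2 _ _ (Finset.sdiff_subset_sdiff (Finset.Subset.refl E) hAB) hEA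

lemma dual_submod {E : Finset (Fin n)} {K : Set (Finset (Fin n))} {x y : Fin n → ℝ}
    (hK : ComplexOn E K) (hsub : SubmodOn E K x y) :
    SubmodOn E (DualOn E K) y x := by
  intro X1 c1 c2 hc1E hc2E hne h1 h2 hX1 hF
  obtain ⟨hX1E, hEX1⟩ := hX1
  have hFE : insert c1 (insert c2 X1) ⊆ E :=
    Finset.insert_subset hc1E (Finset.insert_subset hc2E hX1E)
  have hX2K : E \ insert c1 (insert c2 X1) ∈ K := by
    by_contra h
    exact hF ⟨hFE, h⟩
  set X2 := E \ insert c1 (insert c2 X1) with hX2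
  have hc1X2 : c1 ∉ X2 := fun h =>
    (Finset.mem_sdiff.1 h).2 (Finset.mem_insert_self c1 _)
  have hc2X2 : c2 ∉ X2 := fun h =>
    (Finset.mem_sdiff.1 h).2 (Finset.mem_insert_of_mem (Finset.mem_insert_self c2 X1))
  have idE : insert c1 (insert c2 X2) = E \ X1 := by
    ext j
    by_cases hj1 : j = c1 <;> by_cases hj2 : j = c2 <;>
      simp [hX2, hj1, hj2, Finset.mem_sdiff, Finset.mem_insert, hc1E, hc2E, h1, h2,
        hne] <;> tauto
  have id1 : insert c2 X2 = E \ insert c1 X1 := by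
    ext j
    by_cases hj1 : j = c1 <;> by_cases hj2 : j = c2 <;>
      simp [hX2, hj1, hj2, Finset.mem_sdiff, Finset.mem_insert, hc1E, hc2E, h1, h2,
        hne, Ne.symm hne] <;> tauto
  have id2 : insert c1 X2 = E \ insert c2 X1 := by
    ext j
    by_cases hj1 : j = c1 <;> by_cases hj2 : j = c2 <;>
      simp [hX2, hj1, hj2, Finset.mem_sdiff, Finset.mem_insert, hc1E, hc2E, h1, h2,
        hne, Ne.symm hne] <;> tauto
  have idX1 : E \ insert c1 (insert c2 X2) = X1 := by
    rw [idE, Finset.sdiff_sdiff_eq_self hX1E]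
  have m1 : insert c1 X1 ∈ DualOn E K ↔ insert c2 X2 ∉ K := by
    constructor
    · intro h
      rw [id1]
      exact h.2
    · intro h
      exact ⟨Finset.insert_subset hc1E hX1E, by rwa [← id1]⟩
  have m2 : insert c2 X1 ∈ DualOn E K ↔ insert c1 X2 ∉ K := by
    constructor
    · intro h
      rw [id2]
      exact h.2
    · intro h
      exact ⟨Finset.insert_subset hc2E hX1E, by rwa [← id2]⟩
  have hFK : insert c1 (insert c2 X2) ∉ K := by rwa [idE]
  have T := hsub X2 c1 c2 hc1E hc2E hne hc1X2 hc2X2 hX2K hFK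
  refine ⟨?_, ?_, ?_⟩
  · intro hd1 hd2
    have := T.2.1 (m2.1 hd2) (m1.1 hd1)
    rw [idX1] at this
    linarith
  · intro hd1 hd2
    have k1 : insert c2 X2 ∈ K := not_not.1 ((not_iff_not.2 m1).1 hd1)
    have k2 : insert c1 X2 ∈ K := not_not.1 ((not_iff_not.2 m2).1 hd2)
    have := T.1 k2 k1
    rw [idX1] at this
    linarith
  · intro hd2 hd1
    have k1 : insert c2 X2 ∈ K := not_not.1 ((not_iff_not.2 m1).1 hd1)
    have := T.2.2 k1 (m2.1 hd2)
    linarith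


lemma threshold_of_full {E : Finset (Fin n)} {K : Set (Finset (Fin n))}
    (h : ∀ A ⊆ E, A ∈ K) : ThresholdOn E K := by
  refine ⟨fun _ => 1, E.card + 1, fun i _ => one_pos, fun A hAE => ?_⟩
  have hsum : ∑ i ∈ A, (1 : ℝ) = A.card := by simp
  constructor
  · intro _
    rw [hsum]
    have : (A.card : ℝ) ≤ E.card := Nat.cast_le.2 (Finset.card_le_card hAE)
    linarith
  · intro _
    exact h A hAE

lemma sep_threshold {E : Finset (Fin n)} {K : Set (Finset (Fin n))}
    (hK : ComplexOn E K) (hEK : E ∉ K) (w : Fin n → ℝ) (Y : ℝ)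
    (hin : ∀ A ⊆ E, A ∈ K → ∑ i ∈ A, w i < Y)
    (hout : ∀ A ⊆ E, A ∉ K → Y < ∑ i ∈ A, w i) :
    ThresholdOn E K := by
  classical
  set faces := E.powerset.filter (· ∈ K) with hfaces
  set nonf := E.powerset.filter (· ∉ K) with hnonf
  have hfne : faces.Nonempty := ⟨∅, by simp [hfaces, hK.1]⟩
  have hnne : nonf.Nonempty := ⟨E, by simp [hnonf, hEK]⟩
  obtain ⟨A₁, hA₁, hmax⟩ := faces.exists_max_image (fun A => ∑ i ∈ A, w i) hfne
  obtain ⟨B₁, hB₁, hmin⟩ := nonf.exists_min_image (fun A => ∑ i ∈ A, w i) hnne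
  rw [hfaces, Finset.mem_filter, Finset.mem_powerset] at hA₁
  rw [hnonf, Finset.mem_filter, Finset.mem_powerset] at hB₁
  set M₁ := ∑ i ∈ A₁, w i with hM₁
  set M₂ := ∑ i ∈ B₁, w i with hM₂
  have hg : M₁ < M₂ := by
    have t1 := hin A₁ hA₁.1 hA₁.2
    have t2 := hout B₁ hB₁.1 hB₁.2
    linarith
  set D : ℝ := 2 * (E.card + 1) with hD
  have hDpos : (0 : ℝ) < D := by positivity
  set δ := (M₂ - M₁) / D with hδ
  have hδpos : 0 < δ := div_pos (by linarith) hDpos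
  have hδD : δ * D = M₂ - M₁ := div_mul_cancel₀ _ (ne_of_gt hDpos)
  set w' := fun j => if w j < δ then δ else w j with hw'
  have hw'ge : ∀ j, w j ≤ w' j := by
    intro j
    by_cases h : w j < δ <;> simp [hw', h]
    linarith
  refine ⟨w', M₂, fun i _ => ?_, fun A hAE => ?_⟩
  · by_cases h : w i < δ <;> simp [hw', h] <;> linarith
  constructor
  · intro hA
    have hsplit : ∑ i ∈ A, w' i =
        δ * (A.filter (fun j => w j < δ)).card +
          ∑ i ∈ A.filter (fun j => ¬ w j < δ), w i := by
      rw [← Finset.sum_filter_add_sum_filter_not A (fun j => w j < δ) w']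
      congr 1
      · rw [Finset.sum_congr rfl
          (fun i hi => if_pos (Finset.mem_filter.1 hi).2), Finset.sum_const,
          nsmul_eq_mul, mul_comm]
      · exact Finset.sum_congr rfl fun i hi => if_neg (Finset.mem_filter.1 hi).2
    have hA2K : A.filter (fun j => ¬ w j < δ) ∈ K :=
      hK.2.2 _ _ (Finset.filter_subset _ _) hA
    have hA2le : ∑ i ∈ A.filter (fun j => ¬ w j < δ), w i ≤ M₁ := by
      apply hmax
      rw [hfaces, Finset.mem_filter, Finset.mem_powerset]
      exact ⟨(Finset.filter_subset _ _).trans hAE, hA2K⟩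
    have hcard : ((A.filter (fun j => w j < δ)).card : ℝ) ≤ E.card :=
      Nat.cast_le.2 (Finset.card_le_card ((Finset.filter_subset _ _).trans hAE))
    have hEcard : (E.card : ℝ) + 2 ≤ D := by
      rw [hD]; ring_nf; linarith
    nlinarith [mul_le_mul_of_nonneg_left hcard (le_of_lt hδpos),
      mul_le_mul_of_nonneg_left hEcard (le_of_lt hδpos)]
  · intro hlt
    by_contra hA
    have ht1 : M₂ ≤ ∑ i ∈ A, w i := by
      apply hmin
      rw [hnonf, Finset.mem_filter, Finset.mem_powerset]
      exact ⟨hAE, hA⟩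
    have ht2 : ∑ i ∈ A, w i ≤ ∑ i ∈ A, w' i := Finset.sum_le_sum fun i _ => hw'ge i
    linarith


lemma submod_ghost {E : Finset (Fin n)} {K : Set (Finset (Fin n))} {x y : Fin n → ℝ}
    (hK : ComplexOn E K) {i : Fin n} (hiE : i ∈ E)
    (hgh : ∀ A ∈ K, i ∉ A) (hsub : SubmodOn E K x y) :
    SubmodOn (E.erase i) K (fun j => x j - y i / (E.erase i).card)
      (fun j => y j + y i / (E.erase i).card) := by
  intro X1 c1 c2 hc1 hc2 hne h1 h2 hX1 hF
  set d := y i / ((E.erase i).card : ℝ) with hd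
  have hc1E : c1 ∈ E := Finset.mem_of_mem_erase hc1
  have hc2E : c2 ∈ E := Finset.mem_of_mem_erase hc2
  have hX1E' : X1 ⊆ E.erase i :=
    Finset.subset_erase.2 ⟨hK.2.1 X1 hX1, hgh X1 hX1⟩
  have hFE' : insert c1 (insert c2 X1) ⊆ E.erase i :=
    Finset.insert_subset hc1 (Finset.insert_subset hc2 hX1E')
  have T := hsub X1 c1 c2 hc1E hc2E hne h1 h2 hX1 hF
  have hiB' : i ∉ (E.erase i) \ insert c1 (insert c2 X1) := by
    simp [Finset.mem_sdiff, Finset.mem_erase]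
  have hiF : i ∉ insert c1 (insert c2 X1) := fun h =>
    (Finset.mem_erase.1 (hFE' h)).1 rfl
  have hsd : E \ insert c1 (insert c2 X1) =
      insert i ((E.erase i) \ insert c1 (insert c2 X1)) := by
    ext j
    by_cases hj : j = i
    · subst hj
      simp [Finset.mem_sdiff, Finset.mem_insert, hiE, hiF]
    · simp only [Finset.mem_sdiff, Finset.mem_insert, Finset.mem_erase, hj,
        false_or]
      tauto
  have hysum : ∑ j ∈ E \ insert c1 (insert c2 X1), y j =
      y i + ∑ j ∈ (E.erase i) \ insert c1 (insert c2 X1), y j := by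
    rw [hsd, Finset.sum_insert hiB']
  -- cardinalities
  have hm0 : 0 < (E.erase i).card := Finset.card_pos.2 ⟨c1, hc1⟩
  have hdm : d * ((E.erase i).card : ℝ) = y i :=
    div_mul_cancel₀ _ (ne_of_gt (Nat.cast_pos.2 hm0))
  have hkb : ((E.erase i) \ insert c1 (insert c2 X1)).card
      + (insert c1 (insert c2 X1)).card = (E.erase i).card :=
    Finset.card_sdiff_add_card_eq_card hFE'
  have hcF : (insert c1 (insert c2 X1)).card = X1.card + 2 := by
    rw [Finset.card_insert_of_notMem, Finset.card_insert_of_notMem h2]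
    simp [Finset.mem_insert, hne, h1]
  have hprod : (((E.erase i) \ insert c1 (insert c2 X1)).card : ℝ) * d
      + (X1.card : ℝ) * d + 2 * d = y i := by
    have : (((E.erase i) \ insert c1 (insert c2 X1)).card : ℝ)
        + (X1.card : ℝ) + 2 = ((E.erase i).card : ℝ) := by
      rw [hcF] at hkb
      push_cast [← hkb]
      ring
    calc (((E.erase i) \ insert c1 (insert c2 X1)).card : ℝ) * d
          + (X1.card : ℝ) * d + 2 * d
        = ((((E.erase i) \ insert c1 (insert c2 X1)).card : ℝ)
          + (X1.card : ℝ) + 2) * d := by ring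
      _ = ((E.erase i).card : ℝ) * d := by rw [this]
      _ = y i := by rw [mul_comm]; exact hdm
  have hsubsum : ∀ (S : Finset (Fin n)) (f : Fin n → ℝ),
      ∑ j ∈ S, (f j - d) = (∑ j ∈ S, f j) - (S.card : ℝ) * d := by
    intro S f
    rw [Finset.sum_sub_distrib, Finset.sum_const, nsmul_eq_mul]
  have haddsum : ∀ (S : Finset (Fin n)) (f : Fin n → ℝ),
      ∑ j ∈ S, (f j + d) = (∑ j ∈ S, f j) + (S.card : ℝ) * d := by
    intro S f
    rw [Finset.sum_add_distrib, Finset.sum_const, nsmul_eq_mul]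
  refine ⟨?_, ?_, ?_⟩
  · intro p1 p2
    have t := T.1 p1 p2
    rw [hysum] at t
    beta_reduce
    rw [hsubsum X1 x, haddsum]
    linarith
  · intro p1 p2
    have t := T.2.1 p1 p2
    rw [hysum] at t
    beta_reduce
    rw [hsubsum X1 x, haddsum]
    linarith
  · intro p1 p2
    have t := T.2.2 p1 p2
    beta_reduce
    linarith


lemma threshold_ghost {E : Finset (Fin n)} {K : Set (Finset (Fin n))} {i : Fin n}
    (hgh : ∀ A ∈ K, i ∉ A) (h : ThresholdOn (E.erase i) K) : ThresholdOn E K := by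
  obtain ⟨w, q, hw, hiff⟩ := h
  refine ⟨fun j => if j = i then |q| + 1 else w j, q, ?_, ?_⟩
  · intro j hj
    beta_reduce
    by_cases hji : j = i
    · rw [if_pos hji]
      have := abs_nonneg q
      linarith
    · rw [if_neg hji]
      exact hw j (Finset.mem_erase.2 ⟨hji, hj⟩)
  · intro A hAE
    beta_reduce
    by_cases hiA : i ∈ A
    · have hAK : A ∉ K := fun h => hgh A h hiA
      simp only [hAK, false_iff, not_lt]
      have hsum : ∑ j ∈ A, (if j = i then |q| + 1 else w j) =
          (∑ j ∈ A.erase i, (if j = i then |q| + 1 else w j)) + (|q| + 1) := by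
        rw [← Finset.sum_erase_add A _ hiA, if_pos rfl]
      have hpos : 0 ≤ ∑ j ∈ A.erase i, (if j = i then |q| + 1 else w j) := by
        apply Finset.sum_nonneg
        intro j hj
        have hji : j ≠ i := (Finset.mem_erase.1 hj).1
        rw [if_neg hji]
        exact le_of_lt (hw j (Finset.mem_erase.2 ⟨hji, hAE (Finset.mem_of_mem_erase hj)⟩))
      have := le_abs_self q
      linarith
    · have hAE' : A ⊆ E.erase i := Finset.subset_erase.2 ⟨hAE, hiA⟩
      have hs : ∑ j ∈ A, (if j = i then |q| + 1 else w j) = ∑ j ∈ A, w j :=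
        Finset.sum_congr rfl fun j hj => if_neg (fun h : j = i => hiA (h ▸ hj))
      rw [hs]
      exact hiff A hAE'

def LinkOn (E : Finset (Fin n)) (K : Set (Finset (Fin n))) (b : Fin n) :
    Set (Finset (Fin n)) :=
  {A | A ⊆ E.erase b ∧ insert b A ∈ K}

lemma link_complex {E : Finset (Fin n)} {K : Set (Finset (Fin n))}
    (hK : ComplexOn E K) {b : Fin n} (hbK : ({b} : Finset (Fin n)) ∈ K) :
    ComplexOn (E.erase b) (LinkOn E K b) := by
  refine ⟨⟨Finset.empty_subset _, by simpa using hbK⟩, fun A hA => hA.1,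
    fun A B hAB hB => ⟨hAB.trans hB.1,
      hK.2.2 _ _ (Finset.insert_subset_insert b hAB) hB.2⟩⟩

lemma submod_coghost {E : Finset (Fin n)} {K : Set (Finset (Fin n))} {x y : Fin n → ℝ}
    (hK : ComplexOn E K) {b : Fin n} (hbE : b ∈ E) (hsub : SubmodOn E K x y) :
    SubmodOn (E.erase b) (LinkOn E K b)
      (fun j => x j + x b / (E.erase b).card)
      (fun j => y j - x b / (E.erase b).card) := by
  intro X1 c1 c2 hc1 hc2 hne h1 h2 hX1 hF
  set d := x b / ((E.erase b).card : ℝ) with hd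
  obtain ⟨hX1E', hbX1K⟩ := hX1
  have hc1E : c1 ∈ E := Finset.mem_of_mem_erase hc1
  have hc2E : c2 ∈ E := Finset.mem_of_mem_erase hc2
  have hbne1 : c1 ≠ b := (Finset.mem_erase.1 hc1).1
  have hbne2 : c2 ≠ b := (Finset.mem_erase.1 hc2).1
  have hbX1 : b ∉ X1 := fun h => (Finset.mem_erase.1 (hX1E' h)).1 rfl
  have h1' : c1 ∉ insert b X1 := by simp [Finset.mem_insert, hbne1, h1]
  have h2' : c2 ∉ insert b X1 := by simp [Finset.mem_insert, hbne2, h2]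
  have hFE' : insert c1 (insert c2 X1) ⊆ E.erase b :=
    Finset.insert_subset hc1 (Finset.insert_subset hc2 hX1E')
  have hbF : insert b (insert c1 (insert c2 X1)) ∉ K := fun h => hF ⟨hFE', h⟩
  have hFb : insert c1 (insert c2 (insert b X1)) =
      insert b (insert c1 (insert c2 X1)) := by
    rw [Finset.insert_comm c2 b X1, Finset.insert_comm c1 b (insert c2 X1)]
  have T := hsub (insert b X1) c1 c2 hc1E hc2E hne h1' h2' hbX1K (by rwa [hFb])
  -- the complement identity
  have hid : E \ insert c1 (insert c2 (insert b X1)) =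
      (E.erase b) \ insert c1 (insert c2 X1) := by
    rw [hFb]
    ext j
    by_cases hj : j = b
    · subst hj
      simp [Finset.mem_sdiff, Finset.mem_insert, Finset.mem_erase]
    · simp only [Finset.mem_sdiff, Finset.mem_insert, Finset.mem_erase, hj,
        false_or, not_false_eq_true, true_and]
      tauto
  rw [hid] at T
  -- membership translations
  have mm : ∀ c, c ∈ E.erase b → c ∉ X1 →
      (insert c (insert b X1) ∈ K ↔ insert c X1 ∈ LinkOn E K b) := by
    intro c hc hcX1
    have hcomm : insert c (insert b X1) = insert b (insert c X1) :=
      Finset.insert_comm c b X1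
    constructor
    · intro h
      exact ⟨Finset.insert_subset hc hX1E', by rwa [← hcomm]⟩
    · intro h
      rw [hcomm]
      exact h.2
  have mm1 := mm c1 hc1 h1
  have mm2 := mm c2 hc2 h2
  -- sums and cardinalities
  have hxsum : ∑ j ∈ insert b X1, x j = x b + ∑ j ∈ X1, x j :=
    Finset.sum_insert hbX1
  have hm0 : 0 < (E.erase b).card := Finset.card_pos.2 ⟨c1, hc1⟩
  have hdm : d * ((E.erase b).card : ℝ) = x b :=
    div_mul_cancel₀ _ (ne_of_gt (Nat.cast_pos.2 hm0))
  have hkb : ((E.erase b) \ insert c1 (insert c2 X1)).card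
      + (insert c1 (insert c2 X1)).card = (E.erase b).card :=
    Finset.card_sdiff_add_card_eq_card hFE'
  have hcF : (insert c1 (insert c2 X1)).card = X1.card + 2 := by
    rw [Finset.card_insert_of_notMem, Finset.card_insert_of_notMem h2]
    simp [Finset.mem_insert, hne, h1]
  have hprod : (((E.erase b) \ insert c1 (insert c2 X1)).card : ℝ) * d
      + (X1.card : ℝ) * d + 2 * d = x b := by
    have hcast : (((E.erase b) \ insert c1 (insert c2 X1)).card : ℝ)
        + (X1.card : ℝ) + 2 = ((E.erase b).card : ℝ) := by
      rw [hcF] at hkb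
      push_cast [← hkb]
      ring
    calc (((E.erase b) \ insert c1 (insert c2 X1)).card : ℝ) * d
          + (X1.card : ℝ) * d + 2 * d
        = ((((E.erase b) \ insert c1 (insert c2 X1)).card : ℝ)
          + (X1.card : ℝ) + 2) * d := by ring
      _ = ((E.erase b).card : ℝ) * d := by rw [hcast]
      _ = x b := by rw [mul_comm]; exact hdm
  have haddsum : ∀ (S : Finset (Fin n)) (f : Fin n → ℝ),
      ∑ j ∈ S, (f j + d) = (∑ j ∈ S, f j) + (S.card : ℝ) * d := by
    intro S f
    rw [Finset.sum_add_distrib, Finset.sum_const, nsmul_eq_mul]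
  have hsubsum : ∀ (S : Finset (Fin n)) (f : Fin n → ℝ),
      ∑ j ∈ S, (f j - d) = (∑ j ∈ S, f j) - (S.card : ℝ) * d := by
    intro S f
    rw [Finset.sum_sub_distrib, Finset.sum_const, nsmul_eq_mul]
  refine ⟨?_, ?_, ?_⟩
  · intro p1 p2
    have t := T.1 (mm1.2 p1) (mm2.2 p2)
    rw [hxsum] at t
    beta_reduce
    rw [haddsum X1 x, hsubsum]
    linarith
  · intro p1 p2
    have t := T.2.1 (fun h => p1 (mm1.1 h)) (fun h => p2 (mm2.1 h))
    rw [hxsum] at t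
    beta_reduce
    rw [haddsum X1 x, hsubsum]
    linarith
  · intro p1 p2
    have t := T.2.2 (mm2.2 p1) (fun h => p2 (mm1.1 h))
    beta_reduce
    linarith

lemma threshold_coghost {E : Finset (Fin n)} {K : Set (Finset (Fin n))}
    (hK : ComplexOn E K) {b : Fin n} (hbE : b ∈ E)
    (hEbK : E.erase b ∈ K) (hEK : E ∉ K)
    (h : ThresholdOn (E.erase b) (LinkOn E K b)) : ThresholdOn E K := by
  obtain ⟨w, q, hw, hiff⟩ := h
  set W := ∑ i ∈ E.erase b, w i with hW
  have hnotin : E.erase b ∉ LinkOn E K b := by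
    intro hL
    have h2 := hL.2
    rw [Finset.insert_erase hbE] at h2
    exact hEK h2
  have hWq : q ≤ W :=
    not_lt.1 (fun hlt => hnotin ((hiff (E.erase b) (Finset.Subset.refl _)).2 hlt))
  refine ⟨fun j => if j = b then W - q + 1 else w j, W + 1, ?_, ?_⟩
  · intro j hj
    beta_reduce
    by_cases hjb : j = b
    · rw [if_pos hjb]
      linarith
    · rw [if_neg hjb]
      exact hw j (Finset.mem_erase.2 ⟨hjb, hj⟩)
  · intro A hAE
    beta_reduce
    by_cases hbA : b ∈ A
    · have hAE' : A.erase b ⊆ E.erase b := Finset.erase_subset_erase b hAE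
      have hsum : ∑ j ∈ A, (if j = b then W - q + 1 else w j) =
          (∑ j ∈ A.erase b, w j) + (W - q + 1) := by
        rw [← Finset.sum_erase_add A _ hbA, if_pos rfl]
        congr 1
        exact Finset.sum_congr rfl fun j hj => if_neg (Finset.mem_erase.1 hj).1
      have hmem : A ∈ K ↔ A.erase b ∈ LinkOn E K b := by
        constructor
        · intro h
          exact ⟨hAE', by rwa [Finset.insert_erase hbA]⟩
        · intro h
          have := h.2
          rwa [Finset.insert_erase hbA] at this
      rw [hmem, hiff _ hAE', hsum]
      constructor <;> intro <;> linarith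
    · have hAE' : A ⊆ E.erase b := Finset.subset_erase.2 ⟨hAE, hbA⟩
      have hAK : A ∈ K := hK.2.2 A (E.erase b) hAE' hEbK
      simp only [hAK, true_iff]
      have hs : ∑ j ∈ A, (if j = b then W - q + 1 else w j) = ∑ j ∈ A, w j :=
        Finset.sum_congr rfl fun j hj => if_neg (fun h : j = b => hbA (h ▸ hj))
      rw [hs]
      have : ∑ j ∈ A, w j ≤ W := by
        rw [hW]
        apply Finset.sum_le_sum_of_subset_of_nonneg hAE'
        intro j hj _
        exact le_of_lt (hw j hj)
      linarith


theorem submod_to_threshold :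
    ∀ (E : Finset (Fin n)) (K : Set (Finset (Fin n))) (x y : Fin n → ℝ),
      ComplexOn E K → SubmodOn E K x y → ThresholdOn E K := by
  intro E
  induction E using Finset.strongInduction with
  | _ E ih =>
    intro K x y hK hsub
    by_cases hEK : E ∈ K
    · exact threshold_of_full (fun A hAE => hK.2.2 A E hAE hEK)
    by_cases hgh : ∃ i ∈ E, ({i} : Finset (Fin n)) ∉ K
    · obtain ⟨i, hiE, hiK⟩ := hgh
      have hghost : ∀ A ∈ K, i ∉ A := fun A hA hiA =>
        hiK (hK.2.2 {i} A (Finset.singleton_subset_iff.2 hiA) hA)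
      have hK' : ComplexOn (E.erase i) K :=
        ⟨hK.1, fun A hA => Finset.subset_erase.2 ⟨hK.2.1 A hA, hghost A hA⟩, hK.2.2⟩
      exact threshold_ghost hghost
        (ih (E.erase i) (Finset.erase_ssubset hiE) K _ _ hK'
          (submod_ghost hK hiE hghost hsub))
    push_neg at hgh
    by_cases hcogh : ∃ b ∈ E, E.erase b ∈ K
    · obtain ⟨b, hbE, hbK⟩ := hcogh
      have hL := link_complex hK (hgh b hbE)
      exact threshold_coghost hK hbE hbK hEK
        (ih (E.erase b) (Finset.erase_ssubset hbE) _ _ _ hL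
          (submod_coghost hK hbE hsub))
    push_neg at hcogh
    have hco : ∀ b ∈ E, E.erase b ∉ K := hcogh
    have hD := dual_complex hK hEK
    have hsubD := dual_submod hK hsub
    have hcoD : ∀ b ∈ E, E.erase b ∉ DualOn E K := by
      intro b hbE hmem
      apply hmem.2
      have hid : E \ E.erase b = {b} := by
        ext j
        by_cases hj : j = b
        · subst hj
          simp [Finset.mem_sdiff, Finset.mem_erase, hbE]
        · simp [Finset.mem_sdiff, Finset.mem_erase, hj]
      rw [hid]
      exact hgh b hbE
    have hEKD : E ∉ DualOn E K := fun h => h.2 (by simpa using hK.1)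
    apply sep_threshold hK hEK (fun j => x j + y j) (∑ j ∈ E, y j)
    · intro A hAE hA
      have h1 := mainP hK hco hEK hsub hAE hA
      have hsplit : ∑ j ∈ E \ A, y j + ∑ j ∈ A, y j = ∑ j ∈ E, y j :=
        Finset.sum_sdiff hAE
      have hadd : ∑ j ∈ A, (x j + y j) = ∑ j ∈ A, x j + ∑ j ∈ A, y j :=
        Finset.sum_add_distrib
      beta_reduce
      linarith
    · intro A hAE hA
      have hdual : E \ A ∈ DualOn E K :=
        ⟨Finset.sdiff_subset, by rwa [Finset.sdiff_sdiff_eq_self hAE]⟩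
      have h1 := mainP hD hcoD hEKD hsubD Finset.sdiff_subset hdual
      rw [Finset.sdiff_sdiff_eq_self hAE] at h1
      have hsplit : ∑ j ∈ E \ A, y j + ∑ j ∈ A, y j = ∑ j ∈ E, y j :=
        Finset.sum_sdiff hAE
      have hadd : ∑ j ∈ A, (x j + y j) = ∑ j ∈ A, x j + ∑ j ∈ A, y j :=
        Finset.sum_add_distrib
      beta_reduce
      linarith




theorem threshold_to_submod (n : ℕ) (hn : 1 ≤ n) (K : Set (Finset (Fin n)))
    (hK : IsComplex n K) (hproper : K ≠ Set.univ) (ht : IsThreshold n K) :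
    ∃ x y : Fin n → ℝ, IsKSubmodular n K x y := by
  classical
  obtain ⟨w, q, hw, hiff⟩ := ht
  set faces := (Finset.univ : Finset (Fin n)).powerset.filter (· ∈ K) with hfaces
  set nonf := (Finset.univ : Finset (Fin n)).powerset.filter (· ∉ K) with hnonf
  have hfne : faces.Nonempty := ⟨∅, by simp [hfaces, hK.1]⟩
  have hnne : nonf.Nonempty := by
    obtain ⟨B, hB⟩ := Set.ne_univ_iff_exists_notMem K |>.1 hproper
    exact ⟨B, by simp [hnonf, hB]⟩
  obtain ⟨A₁, hA₁, hmax⟩ := faces.exists_max_image (fun A => ∑ i ∈ A, w i) hfne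
  obtain ⟨B₁, hB₁, hmin⟩ := nonf.exists_min_image (fun A => ∑ i ∈ A, w i) hnne
  rw [hfaces, Finset.mem_filter] at hA₁
  rw [hnonf, Finset.mem_filter] at hB₁
  set M₁ := ∑ i ∈ A₁, w i with hM₁
  set M₂ := ∑ i ∈ B₁, w i with hM₂
  have hM₁q : M₁ < q := (hiff A₁).1 hA₁.2
  have hM₂q : q ≤ M₂ := not_lt.1 (fun h => hB₁.2 ((hiff B₁).2 h))
  set Q : ℝ := (M₁ + M₂) / 2 with hQ
  have hq1 : M₁ < Q := by rw [hQ]; linarith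
  have hq2 : Q < M₂ := by rw [hQ]; linarith
  set W := ∑ i ∈ (Finset.univ : Finset (Fin n)), w i with hWdef
  have hW : 0 < W := by
    apply Finset.sum_pos (fun i _ => hw i)
    exact ⟨⟨0, hn⟩, Finset.mem_univ _⟩
  have hfc : ∀ S, S ∈ K → ∑ i ∈ S, w i ≤ M₁ := by
    intro S hS
    apply hmax
    simp [hfaces, hS]
  have hnf : ∀ S, S ∉ K → M₂ ≤ ∑ i ∈ S, w i := by
    intro S hS
    apply hmin
    simp [hnonf, hS]
  refine ⟨fun i => (W - Q) * w i, fun i => Q * w i, ?_⟩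
  intro X1 c1 c2 hne h1 h2 hX1 hF
  have hFsum : ∑ i ∈ insert c1 (insert c2 X1), w i = ∑ i ∈ X1, w i + w c1 + w c2 := by
    rw [Finset.sum_insert (by simp [Finset.mem_insert, hne, h1]),
      Finset.sum_insert h2]
    ring
  have hcompl : ∑ j ∈ (insert c1 (insert c2 X1))ᶜ, w j =
      W - ∑ i ∈ insert c1 (insert c2 X1), w i := by
    have := Finset.sum_compl_add_sum (insert c1 (insert c2 X1)) w
    rw [hWdef]
    linarith
  have hFK : M₂ ≤ ∑ i ∈ insert c1 (insert c2 X1), w i := hnf _ hF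
  have hX1le : ∑ i ∈ X1, w i ≤ M₁ := hfc X1 hX1
  have e1 : ∀ S : Finset (Fin n), ∑ i ∈ S, (W - Q) * w i = (W - Q) * ∑ i ∈ S, w i :=
    fun S => (Finset.mul_sum S w (W - Q)).symm
  have e2 : ∀ S : Finset (Fin n), ∑ i ∈ S, Q * w i = Q * ∑ i ∈ S, w i :=
    fun S => (Finset.mul_sum S w Q).symm
  refine ⟨?_, ?_, ?_⟩
  · intro _ _
    beta_reduce
    rw [e1, e2, hcompl, hFsum]
    nlinarith [mul_pos hW (show (0:ℝ) < ∑ i ∈ X1, w i + w c1 + w c2 - Q by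
      rw [← hFsum]; linarith)]
  · intro _ _
    beta_reduce
    rw [e1, e2, hcompl, hFsum]
    nlinarith [mul_pos hW (show (0:ℝ) < Q - ∑ i ∈ X1, w i by linarith)]
  · beta_reduce
    intro _ _
    nlinarith [mul_pos hW (hw c2)]


end BierDev

/-- For `n ≥ 1` and a proper simplicial complex `K` on `[n]`
without ghost vertices, `K` is a threshold complex iff `K` admits a
K-submodular function. -/
theorem threshold_iff_exists_KSubmodular (n : ℕ) (hn : 1 ≤ n)
    (K : Set (Finset (Fin n))) (hK : IsComplex n K)
    (hproper : K ≠ Set.univ) (hghost : NoGhost n K) :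
    IsThreshold n K ↔ ∃ x y : Fin n → ℝ, IsKSubmodular n K x y := by
  constructor
  · exact BierDev.threshold_to_submod n hn K hK hproper
  · rintro ⟨x, y, hxy⟩
    have hKC : BierDev.ComplexOn (Finset.univ : Finset (Fin n)) K :=
      ⟨hK.1, fun A _ => Finset.subset_univ A, hK.2⟩
    have hsub : BierDev.SubmodOn (Finset.univ : Finset (Fin n)) K x y := by
      intro X1 c1 c2 _ _ hne h1 h2 hX1 hF
      have h := hxy X1 c1 c2 hne h1 h2 hX1 hF
      rwa [Finset.compl_eq_univ_sdiff] at h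
    obtain ⟨w, q, hw, hiff⟩ := BierDev.submod_to_threshold Finset.univ K x y hKC hsub
    exact ⟨w, q, fun i => hw i (Finset.mem_univ i), fun A => hiff A (Finset.subset_univ A)⟩
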